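/- Range-space characterization of trajectories: let (A,B,C,D) be a minimal controllable LTI system, let (u^d, y^d) be a trajectory of length T, and suppose u^d is persistently exciting of order N+n. Then the set of all trajectories (u,y) of length N of the system, viewed as vectors in ℝ^{mN} × ℝ^{pN}, equals the column space (range) of the stacked Hankel matrix [H_N(u^d); H_N(y^d)] ∈ ℝ^{(m+p)N×(T−N+1)}. -/

import Mathlib

open Matrix

/-- The block Hankel matrix of depth `N` of a signal `u` of length `T` with
values in `ℝ^m` (0-indexed: the `(i,k)` block is `u (i+k)` for
`i = 0,…,N-1`, `k = 0,…,T-N`). -/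
def hankelMatrix (m N T : ℕ) (u : ℕ → Fin m → ℝ) :
    Matrix (Fin N × Fin m) (Fin (T - N + 1)) ℝ :=
  fun ia k => u (ia.1.val + k.val) ia.2

/-- `(u, y)` is an input-output trajectory of length `N` of the LTI system
`(A, B, C, D)`. -/
def IsTrajectory (n m p N : ℕ) (A : Matrix (Fin n) (Fin n) ℝ)
    (B : Matrix (Fin n) (Fin m) ℝ) (C : Matrix (Fin p) (Fin n) ℝ)
    (D : Matrix (Fin p) (Fin m) ℝ)
    (u : ℕ → Fin m → ℝ) (y : ℕ → Fin p → ℝ) : Prop :=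
  ∃ x : ℕ → Fin n → ℝ,
    (∀ t, t + 1 < N → x (t + 1) = A.mulVec (x t) + B.mulVec (u t)) ∧
    (∀ t, t < N → y t = C.mulVec (x t) + D.mulVec (u t))

/-- The controllability matrix `[B, AB, …, A^{n-1}B]`. -/
def ctrbMatrix (n m : ℕ) (A : Matrix (Fin n) (Fin n) ℝ)
    (B : Matrix (Fin n) (Fin m) ℝ) : Matrix (Fin n) (Fin n × Fin m) ℝ :=
  fun i jk => (A ^ (jk.1 : ℕ) * B) i jk.2

/-- The observability matrix `[C; CA; …; CA^{K-1}]` of order `K`. -/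
def obsMatrix (n p K : ℕ) (A : Matrix (Fin n) (Fin n) ℝ)
    (C : Matrix (Fin p) (Fin n) ℝ) : Matrix (Fin K × Fin p) (Fin n) ℝ :=
  fun ip j => (C * A ^ (ip.1 : ℕ)) ip.2 j

/-- `bV A B ξ s = ξᵀ Aˢ B`. -/
def bV {n m : ℕ} (A : Matrix (Fin n) (Fin n) ℝ) (B : Matrix (Fin n) (Fin m) ℝ)
    (ξ : Fin n → ℝ) (s : ℕ) : Fin m → ℝ := ξ ᵥ* (A ^ s * B)

/-- coefficient vectors -/
def eV {n m : ℕ} (A : Matrix (Fin n) (Fin n) ℝ) (B : Matrix (Fin n) (Fin m) ℝ)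
    (ξ : Fin n → ℝ) (ηf : ℕ → Fin m → ℝ) (j i : ℕ) : Fin m → ℝ :=
  if i < j then -(bV A B ξ (j - 1 - i)) else -(ηf (i - j))

lemma eV_succ {n m : ℕ} (A : Matrix (Fin n) (Fin n) ℝ) (B : Matrix (Fin n) (Fin m) ℝ)
    (ξ : Fin n → ℝ) (ηf : ℕ → Fin m → ℝ) (j i : ℕ) :
    eV A B ξ ηf (j + 1) (i + 1) = eV A B ξ ηf j i := by
  unfold eV
  by_cases h : i < j
  · rw [if_pos (by omega), if_pos h]
    have : j + 1 - 1 - (i + 1) = j - 1 - i := by omega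
    rw [this]
  · rw [if_neg (by omega), if_neg h]
    have : i + 1 - (j + 1) = i - j := by omega
    rw [this]

lemma sum_mulVec' {ι : Type*} (s : Finset ι) {q r : ℕ} (M : ι → Matrix (Fin q) (Fin r) ℝ)
    (x : Fin r → ℝ) : (∑ j ∈ s, M j) *ᵥ x = ∑ j ∈ s, (M j *ᵥ x) := by
  classical
  induction s using Finset.induction_on with
  | empty => simp
  | insert _ _ h ih => rw [Finset.sum_insert h, Finset.sum_insert h, Matrix.add_mulVec, ih]

lemma dotProduct_sum' {ι : Type*} (s : Finset ι) {r : ℕ} (ξ : Fin r → ℝ)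
    (f : ι → Fin r → ℝ) : ξ ⬝ᵥ (∑ j ∈ s, f j) = ∑ j ∈ s, ξ ⬝ᵥ f j := by
  simp only [dotProduct, Finset.sum_apply, Finset.mul_sum]
  exact Finset.sum_comm

lemma mulVec_sum_smul {ι : Type*} (s : Finset ι) {q r : ℕ} (A : Matrix (Fin q) (Fin r) ℝ)
    (g : ι → ℝ) (f : ι → Fin r → ℝ) :
    A *ᵥ (∑ k ∈ s, g k • f k) = ∑ k ∈ s, g k • (A *ᵥ f k) := by
  funext i
  simp only [Matrix.mulVec, dotProduct, Finset.sum_apply, Pi.smul_apply,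
    smul_eq_mul, Finset.mul_sum]
  rw [Finset.sum_comm]
  refine Finset.sum_congr rfl fun i' _ => ?_
  refine Finset.sum_congr rfl fun k _ => ?_
  ring

lemma aux_vecMul_eq_zero {r c : Type*} [Fintype r] [Fintype c] (M : Matrix r c ℝ)
    (h : M.rank = Fintype.card r) : ∀ v, M.vecMul v = 0 → v = 0 := by
  have hli : LinearIndependent ℝ (fun i => M i) := by
    rw [linearIndependent_iff_card_eq_finrank_span]
    rw [Matrix.rank_eq_finrank_span_row] at h
    exact h.symm
  intro v hv
  exact Matrix.vecMul_injective_iff.mpr hli (by simp [hv])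

lemma aux_mulVec_surjective {r c : Type*} [Fintype r] [Fintype c] (M : Matrix r c ℝ)
    (h : ∀ v, M.vecMul v = 0 → v = 0) : Function.Surjective M.mulVec := by
  have hinj : Function.Injective M.vecMul := by
    intro v1 v2 hv
    simp only at hv
    have := h (v1 - v2) (by rw [Matrix.sub_vecMul, hv, sub_self])
    exact sub_eq_zero.mp this
  have hli := Matrix.vecMul_injective_iff.mp hinj
  have hrank : M.rank = Fintype.card r := hli.rank_matrix
  have htop : LinearMap.range M.mulVecLin = ⊤ := by
    apply Submodule.eq_top_of_finrank_eq
    rw [show Module.finrank ℝ (LinearMap.range M.mulVecLin) = M.rank from rfl, hrank,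
      Module.finrank_fintype_fun_eq_card]
  intro y
  have hs := LinearMap.range_eq_top.mp htop
  obtain ⟨g, hg⟩ := hs y
  exact ⟨g, hg⟩

lemma eV_lt {n m : ℕ} (A : Matrix (Fin n) (Fin n) ℝ) (B : Matrix (Fin n) (Fin m) ℝ)
    (ξ : Fin n → ℝ) (ηf : ℕ → Fin m → ℝ) {j i : ℕ} (h : i < j) :
    eV A B ξ ηf j i = -(bV A B ξ (j - 1 - i)) := if_pos h

lemma eV_ge {n m : ℕ} (A : Matrix (Fin n) (Fin n) ℝ) (B : Matrix (Fin n) (Fin m) ℝ)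
    (ξ : Fin n → ℝ) (ηf : ℕ → Fin m → ℝ) {j i : ℕ} (h : ¬ i < j) :
    eV A B ξ ηf j i = -(ηf (i - j)) := if_neg h

lemma null_triv (n m T N : ℕ) (hN : 0 < N)
    (A : Matrix (Fin n) (Fin n) ℝ) (B : Matrix (Fin n) (Fin m) ℝ)
    (hctrb : (ctrbMatrix n m A B).rank = n)
    (ud : ℕ → Fin m → ℝ) (xd : ℕ → Fin n → ℝ)
    (hdyn : ∀ k, k + 1 < T → xd (k + 1) = A.mulVec (xd k) + B.mulVec (ud k))
    (hNnT : N + n ≤ T)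
    (hpe : (hankelMatrix m (N + n) T ud).rank = m * (N + n)) :
    ∀ v : (Fin n ⊕ (Fin N × Fin m)) → ℝ,
      (Matrix.of (fun r (k : Fin (T - N + 1)) =>
        Sum.elim (fun i => xd k.val i)
          (fun ta => ud (ta.1.val + k.val) ta.2) r)).vecMul v = 0 → v = 0 := by
  intro v hv
  set ξ : Fin n → ℝ := fun i => v (Sum.inl i) with hξdef
  set ηf : ℕ → Fin m → ℝ := fun t a => if h : t < N then v (Sum.inr (⟨t, h⟩, a)) else 0
    with hηdef
  have hηzero : ∀ t, N ≤ t → ηf t = 0 := by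
    intro t ht
    funext a
    simp only [hηdef]
    rw [dif_neg (by omega)]
    simp
  -- base relation from the null hypothesis
  have h0 : ∀ k, k + N ≤ T → (ξ ᵥ* (A ^ 0)) ⬝ᵥ xd k = -∑ t ∈ Finset.range N, (ηf t ⬝ᵥ ud (k + t)) := by
    intro k hk
    have hc := congrFun hv ⟨k, by omega⟩
    simp only [Matrix.vecMul, dotProduct, Matrix.of_apply, Pi.zero_apply] at hc
    rw [Fintype.sum_sum_type] at hc
    simp only [Sum.elim_inl, Sum.elim_inr] at hc
    have h1 : ∑ i : Fin n, v (Sum.inl i) * xd k i = (ξ ᵥ* (A ^ 0)) ⬝ᵥ xd k := by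
      simp [hξdef, dotProduct, pow_zero, Matrix.vecMul_one]
    have h2 : ∑ ta : Fin N × Fin m, v (Sum.inr ta) * ud (ta.1.val + k) ta.2
        = ∑ t ∈ Finset.range N, (ηf t ⬝ᵥ ud (k + t)) := by
      rw [← Fin.sum_univ_eq_sum_range (fun t => ηf t ⬝ᵥ ud (k + t)) N]
      rw [Fintype.sum_prod_type]
      refine Finset.sum_congr rfl fun t _ => ?_
      simp only [dotProduct, hηdef]
      refine Finset.sum_congr rfl fun a _ => ?_
      rw [dif_pos t.isLt]
      congr 2 <;> omega
    rw [h1, h2] at hc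
    linarith
  -- one-step recursion
  have hstep : ∀ j k, k + 1 < T →
      (ξ ᵥ* (A ^ (j + 1))) ⬝ᵥ xd k
        = (ξ ᵥ* (A ^ j)) ⬝ᵥ xd (k + 1) - bV A B ξ j ⬝ᵥ ud k := by
    intro j k hk
    have hx : A.mulVec (xd k) = xd (k + 1) - B.mulVec (ud k) := by
      rw [hdyn k hk]; abel
    calc (ξ ᵥ* (A ^ (j + 1))) ⬝ᵥ xd k = ((ξ ᵥ* (A ^ j)) ᵥ* A) ⬝ᵥ xd k := by
          rw [pow_succ, ← Matrix.vecMul_vecMul]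
      _ = (ξ ᵥ* (A ^ j)) ⬝ᵥ (A *ᵥ xd k) := by rw [Matrix.dotProduct_mulVec]
      _ = (ξ ᵥ* (A ^ j)) ⬝ᵥ (xd (k+1) - B *ᵥ ud k) := by rw [hx]
      _ = (ξ ᵥ* (A ^ j)) ⬝ᵥ xd (k + 1) - (ξ ᵥ* (A ^ j)) ⬝ᵥ (B *ᵥ ud k) := by
          rw [dotProduct_sub]
      _ = (ξ ᵥ* (A ^ j)) ⬝ᵥ xd (k + 1) - bV A B ξ j ⬝ᵥ ud k := by
          rw [Matrix.dotProduct_mulVec, Matrix.vecMul_vecMul]; rfl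
  -- main induction: G j k as combination of inputs
  have hA : ∀ j, j ≤ n → ∀ k, k + j + N ≤ T →
      (ξ ᵥ* (A ^ j)) ⬝ᵥ xd k
        = ∑ i ∈ Finset.range (N + n), (eV A B ξ ηf j i ⬝ᵥ ud (k + i)) := by
    intro j
    induction j with
    | zero =>
      intro _ k hk
      rw [h0 k (by omega)]
      rw [← Finset.sum_neg_distrib]
      have hfun : ∀ i ∈ Finset.range (N + n), eV A B ξ ηf 0 i ⬝ᵥ ud (k + i)
          = -(ηf i ⬝ᵥ ud (k + i)) := by
        intro i _
        unfold eV
        rw [if_neg (by omega)]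
        rw [Nat.sub_zero, neg_dotProduct]
      rw [Finset.sum_congr rfl hfun]
      exact Finset.sum_subset (Finset.range_subset_range.mpr (by omega))
        (fun i _ hi => by
          rw [hηzero i (by simpa using hi), zero_dotProduct, neg_zero])
    | succ j ih =>
      intro hj k hk
      rw [hstep j k (by omega), ih (by omega) (k + 1) (by omega)]
      obtain ⟨s, hs⟩ : ∃ s, N + n = s + 1 := ⟨N + n - 1, by omega⟩
      rw [hs, Finset.sum_range_succ' (fun i => eV A B ξ ηf (j+1) i ⬝ᵥ ud (k + i)) s,
        Finset.sum_range_succ (fun i => eV A B ξ ηf j i ⬝ᵥ ud (k + 1 + i)) s]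
      have hlast : eV A B ξ ηf j s = 0 := by
        unfold eV
        rw [if_neg (by omega), hηzero (s - j) (by omega), neg_zero]
      have hfirst : eV A B ξ ηf (j+1) 0 = -(bV A B ξ j) := by
        unfold eV
        rw [if_pos (by omega)]
        congr 1
      rw [hlast, hfirst]
      simp only [zero_dotProduct, add_zero, neg_dotProduct]
      have : ∀ i ∈ Finset.range s,
          eV A B ξ ηf (j+1) (i+1) ⬝ᵥ ud (k + (i + 1)) = eV A B ξ ηf j i ⬝ᵥ ud (k + 1 + i) := by
        intro i _
        rw [eV_succ, show k + (i + 1) = k + 1 + i by omega]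
      rw [Finset.sum_congr rfl this]
      ring
  -- Cayley-Hamilton
  set c : ℕ → ℝ := fun j => (Matrix.charpoly A).coeff j with hcdef
  have hCH : (A ^ n) + ∑ j ∈ Finset.range n, c j • A ^ j = 0 := by
    have h1 := Matrix.aeval_self_charpoly A
    rw [Polynomial.aeval_eq_sum_range] at h1
    rw [Matrix.charpoly_natDegree_eq_dim] at h1
    rw [Fintype.card_fin, Finset.sum_range_succ] at h1
    have hmon : (Matrix.charpoly A).coeff n = 1 := by
      have hm := (Matrix.charpoly_monic A).coeff_natDegree
      have hdeg := Matrix.charpoly_natDegree_eq_dim A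
      rw [Fintype.card_fin] at hdeg
      rwa [hdeg] at hm
    rw [hmon, one_smul] at h1
    rw [add_comm]
    exact h1
  have hGn : ∀ k, (ξ ᵥ* (A ^ n)) ⬝ᵥ xd k
      + ∑ j ∈ Finset.range n, c j * ((ξ ᵥ* (A ^ j)) ⬝ᵥ xd k) = 0 := by
    intro k
    have h2 : (A ^ n + ∑ j ∈ Finset.range n, c j • A ^ j) *ᵥ xd k = 0 := by
      rw [hCH]
      simp
    rw [Matrix.add_mulVec, sum_mulVec'] at h2
    have h3 := congrArg (fun w => ξ ⬝ᵥ w) h2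
    simp only [dotProduct_zero] at h3
    rw [dotProduct_add, dotProduct_sum'] at h3
    rw [← h3]
    congr 1
    · rw [Matrix.dotProduct_mulVec]
    · refine Finset.sum_congr rfl fun j _ => ?_
      rw [Matrix.smul_mulVec, dotProduct_smul, smul_eq_mul,
        Matrix.dotProduct_mulVec]
  -- the combined left-null vector of the deep Hankel matrix
  set W : Fin (N + n) × Fin m → ℝ := fun ia =>
    eV A B ξ ηf n ia.1 ia.2 + ∑ j ∈ Finset.range n, c j * eV A B ξ ηf j ia.1 ia.2 with hWdef
  have hWnull : (hankelMatrix m (N + n) T ud).vecMul W = 0 := by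
    funext k'
    simp only [Matrix.vecMul, dotProduct, hankelMatrix, Pi.zero_apply]
    rw [Fintype.sum_prod_type]
    have hk' : (k' : ℕ) + n + N ≤ T := by
      have := k'.isLt
      omega
    have hcol : ∀ i : Fin (N + n), ∑ a : Fin m, W (i, a) * ud (i.val + k'.val) a
        = eV A B ξ ηf n i ⬝ᵥ ud (k'.val + i.val)
          + ∑ j ∈ Finset.range n, c j * (eV A B ξ ηf j i ⬝ᵥ ud (k'.val + i.val)) := by
      intro i
      simp only [hWdef, dotProduct]
      rw [show i.val + k'.val = k'.val + i.val by omega]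
      rw [Finset.sum_congr rfl (fun a _ => add_mul _ _ _), Finset.sum_add_distrib]
      congr 1
      simp_rw [Finset.sum_mul, Finset.mul_sum]
      rw [Finset.sum_comm]
      exact Finset.sum_congr rfl fun j _ => Finset.sum_congr rfl fun a _ => by ring
    rw [Finset.sum_congr rfl (fun i _ => hcol i), Finset.sum_add_distrib]
    have e1 : ∑ i : Fin (N + n), eV A B ξ ηf n i ⬝ᵥ ud (k'.val + i.val)
        = (ξ ᵥ* (A ^ n)) ⬝ᵥ xd k'.val := by
      rw [hA n le_rfl k'.val (by omega)]
      exact (Fin.sum_univ_eq_sum_range (fun i => eV A B ξ ηf n i ⬝ᵥ ud (k'.val + i)) (N + n))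
    have e2 : ∑ i : Fin (N + n), ∑ j ∈ Finset.range n, c j * (eV A B ξ ηf j i ⬝ᵥ ud (k'.val + i.val))
        = ∑ j ∈ Finset.range n, c j * ((ξ ᵥ* (A ^ j)) ⬝ᵥ xd k'.val) := by
      rw [Finset.sum_comm]
      refine Finset.sum_congr rfl fun j hj => ?_
      rw [Finset.mem_range] at hj
      rw [← Finset.mul_sum]
      congr 1
      rw [hA j (by omega) k'.val (by omega)]
      exact (Fin.sum_univ_eq_sum_range (fun i => eV A B ξ ηf j i ⬝ᵥ ud (k'.val + i)) (N + n))
    rw [e1, e2]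
    exact hGn k'.val
  -- persistency of excitation: the left kernel of the deep Hankel matrix is trivial
  have hW0 : W = 0 := by
    apply aux_vecMul_eq_zero (hankelMatrix m (N + n) T ud) ?_ W hWnull
    rw [hpe]
    simp [mul_comm]
  have hWz : ∀ i, i < N + n → ∀ a : Fin m,
      eV A B ξ ηf n i a + ∑ j ∈ Finset.range n, c j * eV A B ξ ηf j i a = 0 := by
    intro i hi a
    have := congrFun hW0 (⟨i, hi⟩, a)
    simpa [hWdef] using this
  -- step 1 : η = 0
  have hη : ∀ t, ηf t = 0 := by
    have hdd : ∀ d t, N ≤ t + d → ηf t = 0 := by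
      intro d
      induction d with
      | zero => intro t ht; exact hηzero t (by omega)
      | succ d ih =>
        intro t ht
        by_cases htN : t < N
        · funext a
          show ηf t a = 0
          have h1 := hWz (n + t) (by omega) a
          have e1 : eV A B ξ ηf n (n + t) = -(ηf t) := by
            rw [eV_ge A B ξ ηf (by omega), show n + t - n = t by omega]
          have e2 : ∀ j ∈ Finset.range n, c j * eV A B ξ ηf j (n + t) a = 0 := by
            intro j hj
            rw [Finset.mem_range] at hj
            rw [eV_ge A B ξ ηf (by omega), ih (n + t - j) (by omega)]
            simp
          rw [e1, Finset.sum_congr rfl e2, Finset.sum_const_zero, add_zero] at h1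
          simp only [Pi.neg_apply] at h1
          linarith
        · exact hηzero t (by omega)
    intro t
    exact hdd N t (by omega)
  -- step 2 : the Markov-type parameters ξᵀAˢB vanish
  have hb : ∀ s, s < n → bV A B ξ s = 0 := by
    intro s
    induction s using Nat.strong_induction_on with
    | _ s ihs =>
      intro hs
      funext a
      show bV A B ξ s a = 0
      have h1 := hWz (n - 1 - s) (by omega) a
      have e1 : eV A B ξ ηf n (n - 1 - s) = -(bV A B ξ s) := by
        rw [eV_lt A B ξ ηf (by omega), show n - 1 - (n - 1 - s) = s by omega]
      have e2 : ∀ j ∈ Finset.range n, c j * eV A B ξ ηf j (n - 1 - s) a = 0 := by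
        intro j hj
        rw [Finset.mem_range] at hj
        by_cases hij : n - 1 - s < j
        · rw [eV_lt A B ξ ηf hij, ihs (j - 1 - (n - 1 - s)) (by omega) (by omega)]
          simp
        · rw [eV_ge A B ξ ηf hij, hη _]
          simp
      rw [e1, Finset.sum_congr rfl e2, Finset.sum_const_zero, add_zero] at h1
      simp only [Pi.neg_apply] at h1
      linarith
  -- step 3 : ξ = 0 by controllability
  have hξ0 : ξ = 0 := by
    apply aux_vecMul_eq_zero (ctrbMatrix n m A B) ?_ ξ ?_
    · rw [hctrb, Fintype.card_fin]
    · funext jk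
      have := congrFun (hb jk.1.val jk.1.isLt) jk.2
      simpa [bV, Matrix.vecMul, dotProduct, ctrbMatrix] using this
  -- conclude
  funext r
  cases r with
  | inl i => exact congrFun hξ0 i
  | inr ta =>
    obtain ⟨t, a⟩ := ta
    have h := congrFun (hη t.val) a
    simp only [hηdef] at h
    rw [dif_pos t.isLt] at h
    simpa using h

/-- Range-space characterization of trajectories: for a minimal controllable
LTI system with data `(u^d, y^d)` of length `T` whose input is persistently
exciting of order `N + n`, the set of all length-`N` trajectories `(u, y)`
(viewed as vectors in `ℝ^{mN} × ℝ^{pN}`) equals the range of the stacked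
Hankel matrix `[H_N(u^d); H_N(y^d)]`. -/
theorem trajectory_range_space (n m p T N : ℕ)
    (A : Matrix (Fin n) (Fin n) ℝ) (B : Matrix (Fin n) (Fin m) ℝ)
    (C : Matrix (Fin p) (Fin n) ℝ) (D : Matrix (Fin p) (Fin m) ℝ)
    (hctrb : (ctrbMatrix n m A B).rank = n)
    (hobs : (obsMatrix n p n A C).rank = n)
    (ud : ℕ → Fin m → ℝ) (yd : ℕ → Fin p → ℝ)
    (hd : IsTrajectory n m p T A B C D ud yd)
    (hNnT : N + n ≤ T)
    (hpe : (hankelMatrix m (N + n) T ud).rank = m * (N + n)) :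
    {w : (Fin N × Fin m → ℝ) × (Fin N × Fin p → ℝ) |
        ∃ u : ℕ → Fin m → ℝ, ∃ y : ℕ → Fin p → ℝ,
          IsTrajectory n m p N A B C D u y ∧
          (∀ (t : Fin N) (a : Fin m), w.1 (t, a) = u t.val a) ∧
          (∀ (t : Fin N) (a : Fin p), w.2 (t, a) = y t.val a)} =
    {w : (Fin N × Fin m → ℝ) × (Fin N × Fin p → ℝ) |
        ∃ g : Fin (T - N + 1) → ℝ,
          (hankelMatrix m N T ud).mulVec g = w.1 ∧
          (hankelMatrix p N T yd).mulVec g = w.2} := by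
  obtain ⟨xdd, hxd, hyd⟩ := hd
  ext w
  simp only [Set.mem_setOf_eq]
  constructor
  · rintro ⟨u, y, ⟨x, hx, hy⟩, hwu, hwy⟩
    rcases Nat.eq_zero_or_pos N with hN | hN
    · subst hN
      exact ⟨0, funext fun ta => ta.1.elim0, funext fun ta => ta.1.elim0⟩
    set M : Matrix (Fin n ⊕ Fin N × Fin m) (Fin (T - N + 1)) ℝ :=
      Matrix.of (fun r k => Sum.elim (fun i => xdd k.val i)
        (fun ta => ud (ta.1.val + k.val) ta.2) r) with hMdef
    have hsurj := aux_mulVec_surjective M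
      (null_triv n m T N hN A B hctrb ud xdd hxd hNnT hpe)
    obtain ⟨g, hg⟩ := hsurj (Sum.elim (x 0) (fun ta => u ta.1.val ta.2))
    have hHu : ∀ (t : Fin N) (a : Fin m),
        (hankelMatrix m N T ud).mulVec g (t, a) = u t.val a :=
      fun t a => congrFun hg (Sum.inr (t, a))
    set z : ℕ → Fin n → ℝ := fun t => ∑ k : Fin (T - N + 1), g k • xdd (t + k.val) with hzdef
    set uS : ℕ → Fin m → ℝ := fun t => ∑ k : Fin (T - N + 1), g k • ud (t + k.val) with huSdef
    have huS : ∀ t', t' < N → uS t' = u t' := by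
      intro t' h
      funext a
      have h2 := hHu ⟨t', h⟩ a
      simp only [hankelMatrix, Matrix.mulVec, dotProduct] at h2
      rw [← h2]
      simp only [huSdef, Finset.sum_apply, Pi.smul_apply, smul_eq_mul]
      exact Finset.sum_congr rfl fun k _ => by ring
    have hz : ∀ t, t < N → z t = x t := by
      intro t
      induction t with
      | zero =>
        intro _
        funext i
        have h1 : M.mulVec g (Sum.inl i) = x 0 i := congrFun hg (Sum.inl i)
        rw [← h1]
        simp only [hzdef, hMdef, Matrix.mulVec, dotProduct, Matrix.of_apply,
          Sum.elim_inl, Finset.sum_apply, Pi.smul_apply, smul_eq_mul, Nat.zero_add]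
        exact Finset.sum_congr rfl fun k _ => by ring
      | succ t ih =>
        intro ht
        have ht' : t < N := by omega
        calc z (t + 1) = ∑ k : Fin (T - N + 1),
              g k • (A *ᵥ xdd (t + k.val) + B *ᵥ ud (t + k.val)) := by
              simp only [hzdef]
              refine Finset.sum_congr rfl fun k _ => ?_
              rw [show t + 1 + (k : ℕ) = (t + (k : ℕ)) + 1 by omega,
                hxd (t + k.val) (by have := k.isLt; omega)]
          _ = (∑ k : Fin (T - N + 1), g k • (A *ᵥ xdd (t + k.val)))
              + ∑ k : Fin (T - N + 1), g k • (B *ᵥ ud (t + k.val)) := by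
              rw [← Finset.sum_add_distrib]
              exact Finset.sum_congr rfl fun k _ => smul_add _ _ _
          _ = A *ᵥ z t + B *ᵥ uS t := by
              simp only [hzdef, huSdef]
              rw [mulVec_sum_smul, mulVec_sum_smul]
          _ = A *ᵥ x t + B *ᵥ u t := by rw [ih ht', huS t ht']
          _ = x (t + 1) := (hx t ht).symm
    refine ⟨g, ?_, ?_⟩
    · funext ta
      obtain ⟨t, a⟩ := ta
      rw [hwu t a]
      exact hHu t a
    · funext ta
      obtain ⟨t, a⟩ := ta
      rw [hwy t a]
      have hyt : (fun a => (hankelMatrix p N T yd).mulVec g (t, a)) = y t.val := by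
        have hfun : (fun a => (hankelMatrix p N T yd).mulVec g (t, a))
            = ∑ k : Fin (T - N + 1), g k • yd (t.val + k.val) := by
          funext a
          simp only [hankelMatrix, Matrix.mulVec, dotProduct, Finset.sum_apply,
            Pi.smul_apply, smul_eq_mul]
          exact Finset.sum_congr rfl fun k _ => by ring
        rw [hfun]
        have hstep : ∀ k : Fin (T - N + 1), yd (t.val + k.val)
            = C *ᵥ xdd (t.val + k.val) + D *ᵥ ud (t.val + k.val) := by
          intro k
          exact hyd (t.val + k.val) (by have := k.isLt; have := t.isLt; omega)
        calc ∑ k : Fin (T - N + 1), g k • yd (t.val + k.val)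
            = ∑ k : Fin (T - N + 1),
              g k • (C *ᵥ xdd (t.val + k.val) + D *ᵥ ud (t.val + k.val)) :=
              Finset.sum_congr rfl fun k _ => by rw [hstep k]
          _ = (∑ k : Fin (T - N + 1), g k • (C *ᵥ xdd (t.val + k.val)))
              + ∑ k : Fin (T - N + 1), g k • (D *ᵥ ud (t.val + k.val)) := by
              rw [← Finset.sum_add_distrib]
              exact Finset.sum_congr rfl fun k _ => smul_add _ _ _
          _ = C *ᵥ z t.val + D *ᵥ uS t.val := by
              simp only [hzdef, huSdef]
              rw [mulVec_sum_smul, mulVec_sum_smul]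
          _ = C *ᵥ x t.val + D *ᵥ u t.val := by rw [hz t.val t.isLt, huS t.val t.isLt]
          _ = y t.val := (hy t.val t.isLt).symm
      exact congrFun hyt a
  · rintro ⟨g, hgu, hgy⟩
    refine ⟨fun t => ∑ k : Fin (T - N + 1), g k • ud (t + k.val),
      fun t => ∑ k : Fin (T - N + 1), g k • yd (t + k.val),
      ⟨fun t => ∑ k : Fin (T - N + 1), g k • xdd (t + k.val), ?_, ?_⟩, ?_, ?_⟩
    · intro t ht
      calc (∑ k : Fin (T - N + 1), g k • xdd (t + 1 + k.val))
          = ∑ k : Fin (T - N + 1), g k • (A *ᵥ xdd (t + k.val) + B *ᵥ ud (t + k.val)) := by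
            refine Finset.sum_congr rfl fun k _ => ?_
            rw [show t + 1 + (k : ℕ) = (t + (k : ℕ)) + 1 by omega,
              hxd (t + k.val) (by have := k.isLt; omega)]
        _ = (∑ k : Fin (T - N + 1), g k • (A *ᵥ xdd (t + k.val)))
            + ∑ k : Fin (T - N + 1), g k • (B *ᵥ ud (t + k.val)) := by
            rw [← Finset.sum_add_distrib]
            exact Finset.sum_congr rfl fun k _ => smul_add _ _ _
        _ = _ := by rw [mulVec_sum_smul, mulVec_sum_smul]
    · intro t ht
      calc (∑ k : Fin (T - N + 1), g k • yd (t + k.val))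
          = ∑ k : Fin (T - N + 1), g k • (C *ᵥ xdd (t + k.val) + D *ᵥ ud (t + k.val)) := by
            refine Finset.sum_congr rfl fun k _ => ?_
            rw [hyd (t + k.val) (by have := k.isLt; omega)]
        _ = (∑ k : Fin (T - N + 1), g k • (C *ᵥ xdd (t + k.val)))
            + ∑ k : Fin (T - N + 1), g k • (D *ᵥ ud (t + k.val)) := by
            rw [← Finset.sum_add_distrib]
            exact Finset.sum_congr rfl fun k _ => smul_add _ _ _
        _ = _ := by rw [mulVec_sum_smul, mulVec_sum_smul]
    · intro t a
      rw [← hgu]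
      simp only [hankelMatrix, Matrix.mulVec, dotProduct, Finset.sum_apply,
        Pi.smul_apply, smul_eq_mul]
      exact Finset.sum_congr rfl fun k _ => by ring
    · intro t a
      rw [← hgy]
      simp only [hankelMatrix, Matrix.mulVec, dotProduct, Finset.sum_apply,
        Pi.smul_apply, smul_eq_mul]
      exact Finset.sum_congr rfl fun k _ => by ring
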